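/- Fix R > 0, let ξ(t) = (3/2)^{1/3} t^{1/3}, L(t) = √(R² − ξ(t)²), and t₁ = (√2/6)·R³. For 0 < t < t₁ and |x₁| < ξ(t), define u(x,t) = 2ξ(t)² − 2R² if |x₂| ≤ ξ(t); u(x,t) = ξ(t)² + x₂² − 2R² if ξ(t) < |x₂| ≤ L(t); u(x,t) = 0 if |x₂| > L(t). Define σ(x,t) = (σ₁, σ₂) by σ₁(x,t) = x₁/ξ(t) if |x₂| ≤ L(t), σ₁(x,t) = 0 if |x₂| > L(t); and σ₂(x,t) = x₂/ξ(t) if |x₂| ≤ ξ(t), σ₂(x,t) = sgn(x₂) if |x₂| > ξ(t). Then for every t ∈ (0,t₁) and every x with |x₁| < ξ(t), |x₂| ≠ ξ(t) and |x₂| ≠ L(t): the map s ↦ u(x,s) is differentiable at t, the partial derivatives ∂σ₁/∂x₁ and ∂σ₂/∂x₂ exist at x, and ∂u/∂t(x,t) = ∂σ₁/∂x₁(x,t) + ∂σ₂/∂x₂(x,t); explicitly both sides equal 2/ξ(t) for |x₂| < ξ(t), equal 1/ξ(t) for ξ(t) < |x₂| < L(t), and equal 0 for |x₂| > L(t). 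-/

import Mathlib

open Filter Topology

private lemma cube_rpow' (x : ℝ) (hx : 0 ≤ x) : (x ^ ((1:ℝ)/3))^3 = x := by
  rw [← Real.rpow_natCast (x ^ ((1:ℝ)/3)) 3, ← Real.rpow_mul hx]
  norm_num

private lemma sq_rpow' (x : ℝ) (hx : 0 ≤ x) : (x ^ ((1:ℝ)/3))^2 = x ^ ((2:ℝ)/3) := by
  rw [← Real.rpow_natCast (x ^ ((1:ℝ)/3)) 2, ← Real.rpow_mul hx]
  norm_num

/-- on the strip {|x₁| < ξ(t)}, for 0 < t < t₁ = (√2/6)R³, the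
truncated explicit solution u (with levels 2ξ(t)² − 2R², ξ(t)² + x₂² − 2R², 0)
and Cahn–Hoffman field σ satisfy u_t = ∂σ₁/∂x₁ + ∂σ₂/∂x₂ at every point with
|x₂| ≠ ξ(t) and |x₂| ≠ L(t), L(t) = √(R² − ξ(t)²); both sides equal 2/ξ(t),
1/ξ(t) or 0 according to whether |x₂| < ξ(t), ξ(t) < |x₂| < L(t) or |x₂| > L(t). -/
theorem stmt12 (R : ℝ) (hR : 0 < R)
    (ξ Lf : ℝ → ℝ)
    (hξ : ∀ t : ℝ, ξ t = (3/2 : ℝ) ^ ((1:ℝ)/3) * t ^ ((1:ℝ)/3))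
    (hLf : ∀ t : ℝ, Lf t = Real.sqrt (R^2 - (ξ t)^2))
    (t₁ : ℝ) (ht₁ : t₁ = Real.sqrt 2 / 6 * R^3)
    (u : ℝ × ℝ → ℝ → ℝ)
    (hu : ∀ (x : ℝ × ℝ) (t : ℝ), u x t =
      if |x.2| ≤ ξ t then 2 * (ξ t)^2 - 2 * R^2
      else if |x.2| ≤ Lf t then (ξ t)^2 + x.2^2 - 2 * R^2
      else 0)
    (σ₁ σ₂ : ℝ × ℝ → ℝ → ℝ)
    (hσ₁ : ∀ (x : ℝ × ℝ) (t : ℝ), σ₁ x t = if |x.2| ≤ Lf t then x.1 / ξ t else 0)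
    (hσ₂ : ∀ (x : ℝ × ℝ) (t : ℝ), σ₂ x t =
      if |x.2| ≤ ξ t then x.2 / ξ t else Real.sign x.2) :
    ∀ t : ℝ, 0 < t → t < t₁ → ∀ x : ℝ × ℝ,
      |x.1| < ξ t → |x.2| ≠ ξ t → |x.2| ≠ Lf t →
      ∃ du d₁ d₂ : ℝ,
        HasDerivAt (fun s : ℝ => u x s) du t
        ∧ HasDerivAt (fun y : ℝ => σ₁ (y, x.2) t) d₁ x.1
        ∧ HasDerivAt (fun y : ℝ => σ₂ (x.1, y) t) d₂ x.2
        ∧ du = d₁ + d₂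
        ∧ (|x.2| < ξ t → du = 2 / ξ t)
        ∧ (ξ t < |x.2| → |x.2| < Lf t → du = 1 / ξ t)
        ∧ (Lf t < |x.2| → du = 0) := by
  intro t ht htlt x _ hne hneL
  have hξpos : 0 < ξ t := by
    rw [hξ]
    exact mul_pos (Real.rpow_pos_of_pos (by norm_num) _) (Real.rpow_pos_of_pos ht _)
  have hξ3 : (ξ t)^3 = 3/2 * t := by
    rw [hξ, mul_pow, cube_rpow' _ (by norm_num), cube_rpow' _ ht.le]
  -- key inequality: 2 ξ(t)² < R²
  have hkey : 2 * (ξ t)^2 < R^2 := by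
    have ht1' : t < Real.sqrt 2 / 6 * R^3 := ht₁ ▸ htlt
    have hs2 : Real.sqrt 2 ^ 2 = 2 := Real.sq_sqrt (by norm_num)
    have h6 : (2 * (ξ t)^2)^3 < (R^2)^3 := by
      have h1 : (2 * (ξ t)^2)^3 = 8 * ((ξ t)^3)^2 := by ring
      rw [h1, hξ3]
      nlinarith [mul_lt_mul'' ht1' ht1' ht.le ht.le, hs2, pow_pos hR 3, Real.sqrt_nonneg 2]
    exact lt_of_pow_lt_pow_left₀ 3 (sq_nonneg R) h6
  have hξL : ξ t < Lf t := by
    rw [hLf t, Real.lt_sqrt hξpos.le]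
    nlinarith
  -- continuity
  have hξc : ContinuousAt ξ t := by
    have h : ContinuousAt (fun s : ℝ => (3/2 : ℝ) ^ ((1:ℝ)/3) * s ^ ((1:ℝ)/3)) t :=
      (Real.continuousAt_rpow_const t _ (Or.inr (by norm_num))).const_mul _
    have hfun : ξ = fun s : ℝ => (3/2 : ℝ) ^ ((1:ℝ)/3) * s ^ ((1:ℝ)/3) := funext hξ
    rw [hfun]; exact h
  have hLc : ContinuousAt Lf t := by
    have hfun : Lf = fun s => Real.sqrt (R^2 - (ξ s)^2) := funext hLf
    rw [hfun]
    exact Real.continuous_sqrt.continuousAt.comp (continuousAt_const.sub (hξc.pow 2))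
  -- derivative of s ↦ ξ(s)²
  have hDsq : HasDerivAt (fun s => (ξ s)^2) (1 / ξ t) t := by
    have hxt : (0:ℝ) < 3/2 * t := by linarith
    have h0 : HasDerivAt (fun s : ℝ => (3/2 : ℝ) * s) (3/2) t := by
      simpa using (hasDerivAt_id t).const_mul (3/2 : ℝ)
    have h2 := h0.rpow_const (p := (2:ℝ)/3) (Or.inl hxt.ne')
    have hval : 1 / ξ t = 3/2 * ((2:ℝ)/3) * (3/2 * t) ^ ((2:ℝ)/3 - 1) := by
      have hξt : ξ t = (3/2 * t) ^ ((1:ℝ)/3) := by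
        rw [hξ, ← Real.mul_rpow (by norm_num) ht.le]
      rw [hξt, one_div, ← Real.rpow_neg hxt.le]
      norm_num
    have h3 : HasDerivAt (fun s : ℝ => ((3:ℝ)/2 * s) ^ ((2:ℝ)/3)) (1 / ξ t) t := by
      rw [hval]; exact h2
    refine h3.congr_of_eventuallyEq ?_
    filter_upwards [eventually_gt_nhds ht] with s hs
    rw [hξ, mul_pow, sq_rpow' _ (by norm_num), sq_rpow' _ hs.le,
      ← Real.mul_rpow (by norm_num) hs.le]
  -- σ₂ derivative in the outer region (|x₂| > ξ t)
  have hD2out : ξ t < |x.2| → HasDerivAt (fun y : ℝ => σ₂ (x.1, y) t) 0 x.2 := by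
    intro hgt
    have hx2ne : x.2 ≠ 0 := by
      intro h0; rw [h0, abs_zero] at hgt; linarith
    have hsgn : ∀ᶠ y in 𝓝 x.2, Real.sign y = Real.sign x.2 := by
      rcases hx2ne.lt_or_gt with hneg | hpos
      · filter_upwards [eventually_lt_nhds hneg] with y hy
        rw [Real.sign_of_neg hy, Real.sign_of_neg hneg]
      · filter_upwards [eventually_gt_nhds hpos] with y hy
        rw [Real.sign_of_pos hy, Real.sign_of_pos hpos]
    have habs : ∀ᶠ y in 𝓝 x.2, ξ t < |y| :=
      (continuous_abs.continuousAt (x := x.2)).eventually_const_lt hgt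
    refine (hasDerivAt_const x.2 (Real.sign x.2)).congr_of_eventuallyEq ?_
    filter_upwards [hsgn, habs] with y h1 h2
    rw [hσ₂, if_neg (not_le.2 h2)]; exact h1
  -- σ₁ derivative
  have hD1in : |x.2| < Lf t → HasDerivAt (fun y : ℝ => σ₁ (y, x.2) t) (1 / ξ t) x.1 := by
    intro hlt
    have hfun : (fun y : ℝ => σ₁ (y, x.2) t) = fun y => y / ξ t := by
      funext y; rw [hσ₁]; exact if_pos hlt.le
    rw [hfun]
    simpa using (hasDerivAt_id x.1).div_const (ξ t)
  rcases hne.lt_or_gt with hA | hBC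
  · -- |x₂| < ξ t
    have hDu : HasDerivAt (fun s => u x s) (2 / ξ t) t := by
      have base : HasDerivAt (fun s => 2 * (ξ s)^2 - 2 * R^2) (2 / ξ t) t := by
        have h := (hDsq.const_mul 2).sub_const (2 * R^2)
        rw [show (2:ℝ) / ξ t = 2 * (1 / ξ t) by ring]; exact h
      refine base.congr_of_eventuallyEq ?_
      filter_upwards [hξc.eventually_const_lt hA] with s hs
      rw [hu, if_pos hs.le]
    have hD2 : HasDerivAt (fun y : ℝ => σ₂ (x.1, y) t) (1 / ξ t) x.2 := by
      have base : HasDerivAt (fun y : ℝ => y / ξ t) (1 / ξ t) x.2 := by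
        simpa using (hasDerivAt_id x.2).div_const (ξ t)
      refine base.congr_of_eventuallyEq ?_
      filter_upwards [(continuous_abs.continuousAt (x := x.2)).eventually_lt_const hA]
        with y hy
      rw [hσ₂, if_pos hy.le]
    refine ⟨2 / ξ t, 1 / ξ t, 1 / ξ t, hDu, hD1in (hA.trans hξL), hD2, by ring,
      fun _ => rfl, fun h _ => absurd (hA.trans h) (lt_irrefl _), fun h => by linarith⟩
  · rcases hneL.lt_or_gt with hB | hC
    · -- ξ t < |x₂| < Lf t
      have hDu : HasDerivAt (fun s => u x s) (1 / ξ t) t := by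
        have base : HasDerivAt (fun s => (ξ s)^2 + (x.2^2 - 2 * R^2)) (1 / ξ t) t :=
          hDsq.add_const _
        refine base.congr_of_eventuallyEq ?_
        filter_upwards [hξc.eventually_lt_const hBC, hLc.eventually_const_lt hB]
          with s hs1 hs2
        rw [hu, if_neg (not_le.2 hs1), if_pos hs2.le]; ring
      refine ⟨1 / ξ t, 1 / ξ t, 0, hDu, hD1in hB, hD2out hBC, by ring,
        fun h => by linarith, fun _ _ => rfl, fun h => by linarith⟩
    · -- Lf t < |x₂|
      have hDu : HasDerivAt (fun s => u x s) 0 t := by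
        refine (hasDerivAt_const t 0).congr_of_eventuallyEq ?_
        filter_upwards [hξc.eventually_lt_const (hξL.trans hC),
          hLc.eventually_lt_const hC] with s hs1 hs2
        rw [hu, if_neg (not_le.2 hs1), if_neg (not_le.2 hs2)]
      have hD1 : HasDerivAt (fun y : ℝ => σ₁ (y, x.2) t) 0 x.1 := by
        have hfun : (fun y : ℝ => σ₁ (y, x.2) t) = fun _ => (0:ℝ) := by
          funext y; rw [hσ₁]; exact if_neg (not_le.2 hC)
        rw [hfun]; exact hasDerivAt_const _ _
      refine ⟨0, 0, 0, hDu, hD1, hD2out (hξL.trans hC), by ring,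
        fun h => by linarith, fun _ h => by linarith, fun _ => rfl⟩
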